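/- Assume κ⁰ ≤ 0 < κ¹ and that the pair is nondegenerate. Then for indices (i,j) ≠ (1,1), the function σ_{i,j} has a zero in (0,∞) if and only if ρ⁰_i > κ⁰/(m−1) and ρ¹_j < κ¹/(m−1); moreover the degeneracy set Λ = { λ ∈ (0,∞) : σ_{i,j}(λ) = 0 for some (i,j) ≠ (1,1) } is infinite, bounded above, has no accumulation points in (0,∞), and its only accumulation point in [0,∞) is 0; equivalently, Λ is the range of a strictly decreasing sequence converging to 0. -/

import Mathlib

open Set Filter

lemma stmt11_aux (S : Set ℝ) (hpos : ∀ s ∈ S, 0 < s) (hinf : S.Infinite)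
    (hfin : ∀ x : ℝ, 0 < x → (S ∩ Set.Ici x).Finite) :
    ∃ v : ℕ → ℝ, StrictAnti v ∧ Filter.Tendsto v Filter.atTop (nhds 0) ∧
      S = Set.range v := by
  classical
  -- every nonempty subset of S has a greatest element
  have hmax : ∀ T : Set ℝ, T ⊆ S → T.Nonempty → ∃ t ∈ T, ∀ s ∈ T, s ≤ t := by
    rintro T hTS ⟨t0, ht0⟩
    have ht0pos := hpos t0 (hTS ht0)
    have hfinT : (T ∩ Set.Ici t0).Finite :=
      (hfin t0 ht0pos).subset (fun x hx => ⟨hTS hx.1, hx.2⟩)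
    obtain ⟨t, htmem, htmaxi⟩ := Set.exists_max_image _ id hfinT ⟨t0, ht0, le_refl t0⟩
    refine ⟨t, htmem.1, fun s hs => ?_⟩
    by_cases h : t0 ≤ s
    · exact htmaxi s ⟨hs, h⟩
    · have := htmem.2
      simp only [Set.mem_Ici] at this
      linarith [not_le.mp h]
  have hstep : ∀ x : ℝ, 0 < x → ∃ t, t ∈ S ∧ t < x ∧ ∀ s ∈ S, s < x → s ≤ t := by
    intro x hx
    have hne : (S ∩ Set.Iio x).Nonempty := by
      have hi : (S \ (S ∩ Set.Ici x)).Infinite := hinf.diff (hfin x hx)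
      obtain ⟨t, htS, htn⟩ := hi.nonempty
      refine ⟨t, htS, ?_⟩
      by_contra h
      exact htn ⟨htS, show x ≤ t from not_lt.mp h⟩
    obtain ⟨t, ⟨htS, htlt⟩, htmax⟩ := hmax (S ∩ Set.Iio x) (fun y hy => hy.1) hne
    exact ⟨t, htS, htlt, fun s hs hsx => htmax s ⟨hs, hsx⟩⟩
  choose! f hfS hflt hfmax using hstep
  obtain ⟨t0, ht0S, ht0max⟩ := hmax S (fun _ h => h) hinf.nonempty
  set v : ℕ → ℝ := fun n => Nat.rec t0 (fun _ y => f y) n with hv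
  have hv0 : v 0 = t0 := rfl
  have hvsucc : ∀ n, v (n + 1) = f (v n) := fun n => rfl
  have hvS : ∀ n, v n ∈ S := by
    intro n
    induction n with
    | zero => exact ht0S
    | succ k ih => rw [hvsucc]; exact hfS (v k) (hpos _ ih)
  have hanti : StrictAnti v := by
    apply strictAnti_nat_of_succ_lt
    intro n
    rw [hvsucc]
    exact hflt (v n) (hpos _ (hvS n))
  have htend : Filter.Tendsto v Filter.atTop (nhds 0) := by
    rw [Metric.tendsto_atTop]
    intro ε hε
    have hfinset : {n : ℕ | ε ≤ v n}.Finite := by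
      have : {n : ℕ | ε ≤ v n} ⊆ v ⁻¹' (S ∩ Set.Ici ε) :=
        fun n hn => ⟨hvS n, hn⟩
      exact ((hfin ε hε).preimage (hanti.injective.injOn)).subset this
    obtain ⟨N, hN⟩ := hfinset.bddAbove
    refine ⟨N + 1, fun n hn => ?_⟩
    have hnn : ¬ ε ≤ v n := by
      intro h
      have := hN h
      omega
    have := hpos _ (hvS n)
    rw [Real.dist_eq, abs_of_pos (by linarith)]
    linarith [not_le.mp hnn]
  refine ⟨v, hanti, htend, ?_⟩
  apply Set.eq_of_subset_of_subset
  · intro s hs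
    have hspos := hpos s hs
    have hex : ∃ n, v n < s := by
      obtain ⟨N, hN⟩ := (Metric.tendsto_atTop.mp htend) s hspos
      have := hN N le_rfl
      rw [Real.dist_eq, abs_of_pos (by linarith [hpos _ (hvS N)])] at this
      exact ⟨N, by linarith⟩
    set n := Nat.find hex with hn
    have hnlt : v n < s := Nat.find_spec hex
    match hn2 : n with
    | 0 =>
      exfalso
      rw [hv0] at hnlt
      exact absurd (ht0max s hs) (not_le.mpr hnlt)
    | k + 1 =>
      have hk : ¬ v k < s := Nat.find_min hex (by omega)
      rcases eq_or_lt_of_le (not_lt.mp hk) with h | h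
      · exact ⟨k, h.symm⟩
      · exfalso
        have := hfmax (v k) (hpos _ (hvS k)) s hs h
        rw [← hvsucc] at this
        linarith
  · rintro _ ⟨n, rfl⟩
    exact hvS n

theorem stmt_11
    (m : ℕ) (hm : 3 ≤ m)
    (κ₀ κ₁ : ℝ)
    (ρ₀ ρ₁ : ℕ → ℝ)
    (hρ₀one : ρ₀ 1 = 0) (hρ₁one : ρ₁ 1 = 0)
    (hρ₀mono : ∀ i j : ℕ, 1 ≤ i → i < j → ρ₀ i < ρ₀ j)
    (hρ₁mono : ∀ i j : ℕ, 1 ≤ i → i < j → ρ₁ i < ρ₁ j)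
    (hρ₀unb : ∀ C : ℝ, ∃ i : ℕ, 1 ≤ i ∧ C < ρ₀ i)
    (hρ₁unb : ∀ C : ℝ, ∃ j : ℕ, 1 ≤ j ∧ C < ρ₁ j)
    (σ : ℕ → ℕ → ℝ → ℝ)
    (hσ : ∀ (i j : ℕ) (l : ℝ), 0 < l →
      σ i j l = ρ₀ i + ρ₁ j / l - (κ₀ + κ₁ / l) / ((m : ℝ) - 1))
    (istar jstar : ℕ)
    (histar1 : 1 ≤ istar) (histar2 : κ₀ / ((m : ℝ) - 1) ≤ ρ₀ istar)
    (histar3 : ∀ i : ℕ, 1 ≤ i → i < istar → ρ₀ i < κ₀ / ((m : ℝ) - 1))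
    (hjstar1 : 1 ≤ jstar) (hjstar2 : κ₁ / ((m : ℝ) - 1) ≤ ρ₁ jstar)
    (hjstar3 : ∀ j : ℕ, 1 ≤ j → j < jstar → ρ₁ j < κ₁ / ((m : ℝ) - 1))
    (hnondeg : ¬ (ρ₀ istar = κ₀ / ((m : ℝ) - 1) ∧ ρ₁ jstar = κ₁ / ((m : ℝ) - 1)))
    (Λ : Set ℝ)
    (hΛ : Λ = {l : ℝ | 0 < l ∧ ∃ i j : ℕ, 1 ≤ i ∧ 1 ≤ j ∧ (i, j) ≠ (1, 1) ∧ σ i j l = 0})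
    (hκ₀ : κ₀ ≤ 0) (hκ₁ : 0 < κ₁) :
    (∀ i j : ℕ, 1 ≤ i → 1 ≤ j → (i, j) ≠ (1, 1) →
      ((∃ l : ℝ, 0 < l ∧ σ i j l = 0) ↔
        (κ₀ / ((m : ℝ) - 1) < ρ₀ i ∧ ρ₁ j < κ₁ / ((m : ℝ) - 1)))) ∧
    Λ.Infinite ∧ BddAbove Λ ∧
    (∀ x : ℝ, 0 < x → ∃ ε > (0 : ℝ), ∀ l ∈ Λ, l ≠ x → ε ≤ |l - x|) ∧
    (∃ v : ℕ → ℝ, StrictAnti v ∧ Filter.Tendsto v Filter.atTop (nhds 0) ∧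
      Λ = Set.range v) := by
  classical
  have hM : (0 : ℝ) < (m : ℝ) - 1 := by
    have : (3 : ℝ) ≤ (m : ℝ) := by exact_mod_cast hm
    linarith
  set c0 : ℝ := κ₀ / ((m : ℝ) - 1) with hc0def
  set c1 : ℝ := κ₁ / ((m : ℝ) - 1) with hc1def
  have hc0 : c0 ≤ 0 := div_nonpos_of_nonpos_of_nonneg hκ₀ (le_of_lt hM)
  have hc1 : 0 < c1 := div_pos hκ₁ hM
  -- basic positivity of ρ₀, ρ₁ for indices ≥ 1
  have hρ₀nn : ∀ i : ℕ, 1 ≤ i → 0 ≤ ρ₀ i := by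
    intro i hi
    rcases hi.lt_or_eq with h | h
    · linarith [hρ₀mono 1 i le_rfl h, hρ₀one]
    · rw [← h, hρ₀one]
  have hρ₁nn : ∀ j : ℕ, 1 ≤ j → 0 ≤ ρ₁ j := by
    intro j hj
    rcases hj.lt_or_eq with h | h
    · linarith [hρ₁mono 1 j le_rfl h, hρ₁one]
    · rw [← h, hρ₁one]
  have hρ₀monole : ∀ i j : ℕ, 1 ≤ i → i ≤ j → ρ₀ i ≤ ρ₀ j := by
    intro i j hi hij
    rcases hij.lt_or_eq with h | h
    · exact le_of_lt (hρ₀mono i j hi h)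
    · rw [h]
  have hρ₁monole : ∀ i j : ℕ, 1 ≤ i → i ≤ j → ρ₁ i ≤ ρ₁ j := by
    intro i j hi hij
    rcases hij.lt_or_eq with h | h
    · exact le_of_lt (hρ₁mono i j hi h)
    · rw [h]
  -- the key characterization of zeros of σ
  have key : ∀ (i j : ℕ) (l : ℝ), 1 ≤ i → 1 ≤ j → (i, j) ≠ (1, 1) → 0 < l →
      (σ i j l = 0 ↔ (c0 < ρ₀ i ∧ ρ₁ j < c1 ∧ l = (c1 - ρ₁ j) / (ρ₀ i - c0))) := by
    intro i j l hi hj hne hl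
    have hl' : l ≠ 0 := ne_of_gt hl
    have hform : σ i j l = ((ρ₀ i - c0) * l + (ρ₁ j - c1)) / l := by
      rw [hσ i j l hl, hc0def, hc1def]
      field_simp
      ring
    have hzero : σ i j l = 0 ↔ (ρ₀ i - c0) * l = c1 - ρ₁ j := by
      rw [hform, div_eq_zero_iff]
      constructor
      · rintro (h | h)
        · linarith
        · exact absurd h hl'
      · intro h; left; linarith
    rw [hzero]
    constructor
    · intro hE
      have hAnn : 0 ≤ ρ₀ i - c0 := by linarith [hρ₀nn i hi]
      rcases eq_or_lt_of_le hAnn with hA | hA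
      · -- degenerate: ρ₀ i = c0, forces contradiction with nondegeneracy
        exfalso
        have hc00 : c0 = 0 := le_antisymm hc0 (by linarith [hρ₀nn i hi])
        have hρi0 : ρ₀ i = 0 := by linarith
        have hi1 : i = 1 := by
          by_contra h
          have h2 : 1 < i := lt_of_le_of_ne hi (Ne.symm h)
          linarith [hρ₀mono 1 i le_rfl h2, hρ₀one]
        have hj1 : j ≠ 1 := by
          intro h
          exact hne (by rw [hi1, h])
        have hcj : ρ₁ j = c1 := by
          have h := hE
          rw [← hA, zero_mul] at h
          linarith
        have histar : istar = 1 := by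
          by_contra h
          have h2 : 1 < istar := lt_of_le_of_ne histar1 (Ne.symm h)
          have := histar3 1 le_rfl h2
          rw [hρ₀one] at this
          linarith [hc00 ▸ this]
        have hρistar : ρ₀ istar = c0 := by rw [histar, hρ₀one, hc00]
        have hjs : ρ₁ jstar ≠ c1 := fun h => hnondeg ⟨hρistar, h⟩
        have hjsgt : c1 < ρ₁ jstar := lt_of_le_of_ne hjstar2 (Ne.symm hjs)
        have hjlt : j < jstar := by
          by_contra h
          have := hρ₁monole jstar j hjstar1 (not_lt.mp h)
          linarith
        have := hjstar3 j hj hjlt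
        linarith
      · have hnum : 0 < c1 - ρ₁ j := by
          rw [← hE]
          positivity
        refine ⟨by linarith, by linarith, ?_⟩
        field_simp at hE ⊢
        linarith [hE]
    · rintro ⟨hA, hB, rfl⟩
      have hA' : ρ₀ i - c0 > 0 := by linarith
      field_simp
  -- finiteness of Λ above any positive level
  have hΛpos : ∀ l ∈ Λ, 0 < l := by
    intro l hl
    rw [hΛ] at hl
    exact hl.1
  have hfinΛ : ∀ x : ℝ, 0 < x → (Λ ∩ Set.Ici x).Finite := by
    intro x hx
    obtain ⟨N, hN1, hNval⟩ := hρ₀unb (c0 + c1 / x)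
    apply Set.Finite.subset
      (((Set.finite_Iio N).prod (Set.finite_Iio jstar)).image
        (fun p : ℕ × ℕ => (c1 - ρ₁ p.2) / (ρ₀ p.1 - c0)))
    rintro l ⟨hlΛ, hlx⟩
    rw [hΛ] at hlΛ
    obtain ⟨hl, i, j, hi, hj, hne, h0⟩ := hlΛ
    obtain ⟨hci, hcj, hleq⟩ := (key i j l hi hj hne hl).mp h0
    simp only [Set.mem_Ici] at hlx
    have hjlt : j < jstar := by
      by_contra h
      have := hρ₁monole jstar j hjstar1 (not_lt.mp h)
      linarith
    have hd : ρ₀ i - c0 ≠ 0 := sub_ne_zero_of_ne (ne_of_gt hci)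
    have hE : (ρ₀ i - c0) * l = c1 - ρ₁ j := by
      rw [hleq]
      field_simp [hd]
    have hilt : i < N := by
      by_contra h
      have hNi := hρ₀monole N i hN1 (not_lt.mp h)
      have h1 : c1 / x < ρ₀ i - c0 := by linarith
      have h2 : (c1 / x) * x = c1 := div_mul_cancel₀ c1 (ne_of_gt hx)
      have h3 : (ρ₀ i - c0) * x ≤ (ρ₀ i - c0) * l :=
        mul_le_mul_of_nonneg_left hlx (by linarith)
      nlinarith [hρ₁nn j hj]
    exact ⟨(i, j), ⟨hilt, hjlt⟩, hleq.symm⟩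
  -- Λ is infinite
  have hΛinf : Λ.Infinite := by
    have hinj : Function.Injective (fun n : ℕ => c1 / (ρ₀ (n + 2) - c0)) := by
      have hsa : StrictAnti (fun n : ℕ => c1 / (ρ₀ (n + 2) - c0)) := by
        intro a b hab
        have h1 : ρ₀ (a + 2) < ρ₀ (b + 2) := hρ₀mono (a + 2) (b + 2) (by omega) (by omega)
        have h2 : 0 < ρ₀ (a + 2) - c0 := by
          linarith [hρ₀mono 1 (a + 2) le_rfl (by omega), hρ₀one]
        exact div_lt_div_of_pos_left hc1 (by linarith) (by linarith)
      exact hsa.injective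
    apply Set.infinite_of_injective_forall_mem hinj
    intro n
    rw [hΛ]
    have h2 : 0 < ρ₀ (n + 2) - c0 := by
      linarith [hρ₀mono 1 (n + 2) le_rfl (by omega), hρ₀one]
    have hlpos : 0 < c1 / (ρ₀ (n + 2) - c0) := div_pos hc1 h2
    refine ⟨hlpos, n + 2, 1, by omega, le_rfl, by simp, ?_⟩
    rw [key (n + 2) 1 _ (by omega) le_rfl (by simp) hlpos]
    refine ⟨by linarith, by rw [hρ₁one]; exact hc1, ?_⟩
    rw [hρ₁one, sub_zero]
  refine ⟨?_, hΛinf, ?_, ?_, ?_⟩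
  · -- the iff characterization
    intro i j hi hj hne
    constructor
    · rintro ⟨l, hl, h0⟩
      obtain ⟨h1, h2, _⟩ := (key i j l hi hj hne hl).mp h0
      exact ⟨h1, h2⟩
    · rintro ⟨h1, h2⟩
      refine ⟨(c1 - ρ₁ j) / (ρ₀ i - c0), div_pos (by linarith) (by linarith), ?_⟩
      rw [key i j _ hi hj hne (div_pos (by linarith) (by linarith))]
      exact ⟨h1, h2, rfl⟩
  · -- bounded above
    obtain ⟨B, hB⟩ := (hfinΛ 1 one_pos).bddAbove
    refine ⟨max B 1, fun l hl => ?_⟩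
    by_cases h : 1 ≤ l
    · exact le_trans (hB ⟨hl, h⟩) (le_max_left _ _)
    · exact le_trans (le_of_not_ge h) (le_max_right _ _)
  · -- no accumulation points in (0, ∞)
    intro x hx
    have hF := hfinΛ (x / 2) (by linarith)
    set T : Finset ℝ := hF.toFinset.filter (fun l => l ≠ x) with hT
    by_cases hTne : T.Nonempty
    · refine ⟨min (x / 2) (T.inf' hTne (fun l => |l - x|)), ?_, ?_⟩
      · apply lt_min (by linarith)
        rw [Finset.lt_inf'_iff]
        intro l hl
        rw [hT, Finset.mem_filter] at hl
        exact abs_pos.mpr (sub_ne_zero.mpr hl.2)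
      · intro l hl hlx
        by_cases h : x / 2 ≤ l
        · have hlT : l ∈ T := by
            rw [hT, Finset.mem_filter, Set.Finite.mem_toFinset]
            exact ⟨⟨hl, h⟩, hlx⟩
          calc min (x / 2) (T.inf' hTne (fun l => |l - x|))
              ≤ T.inf' hTne (fun l => |l - x|) := min_le_right _ _
            _ ≤ |l - x| := Finset.inf'_le _ hlT
        · have : |l - x| = x - l := by
            rw [abs_of_neg (by linarith [not_le.mp h])]
            ring
          rw [this]
          have := min_le_left (x / 2) (T.inf' hTne (fun l => |l - x|))
          linarith [not_le.mp h]
    · refine ⟨x / 2, by linarith, fun l hl hlx => ?_⟩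
      by_cases h : x / 2 ≤ l
      · exfalso
        apply hTne
        refine ⟨l, ?_⟩
        rw [hT, Finset.mem_filter, Set.Finite.mem_toFinset]
        exact ⟨⟨hl, h⟩, hlx⟩
      · have : |l - x| = x - l := by
          rw [abs_of_neg (by linarith [not_le.mp h])]
          ring
        rw [this]
        linarith [not_le.mp h]
  · exact stmt11_aux Λ hΛpos hΛinf hfinΛ
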